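/- Let x, y, p, q ∈ ℝ² with |x|, |y|, |p|, |q| < r, x ≠ y, p ≠ q, all four points lying on one line ℓ. Identify ℝ² with ℂ and suppose that arg((z−y)/(z−x)) = arg((z−q)/(z−p)) (as angles subtended, i.e., ∠xzy = ∠pzq) for all z on the circle |z| = r. Then x = p and y = q, or x = q and y = p. -/

import Mathlib

open Metric Set EuclideanGeometry Complex ComplexConjugate

lemma ratio_eq (u1 v1 u2 v2 : ℂ)
    (hang : InnerProductGeometry.angle u1 v1 = InnerProductGeometry.angle u2 v2) :
    (conj u1 * v1).re * |(conj u2 * v2).im| = (conj u2 * v2).re * |(conj u1 * v1).im| := by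
  have key : ∀ u v : ℂ, Real.cos (InnerProductGeometry.angle u v) * ‖conj u * v‖
      = (conj u * v).re ∧ Real.sin (InnerProductGeometry.angle u v) * ‖conj u * v‖
      = |(conj u * v).im| := by
    intro u v
    have hnorm : ‖u‖ * ‖v‖ = ‖conj u * v‖ := by
      simp [norm_mul]
    constructor
    · have := InnerProductGeometry.cos_angle_mul_norm_mul_norm u v
      rw [hnorm] at this
      rw [this, Complex.inner]; rw [mul_comm]
    · have := InnerProductGeometry.sin_angle_mul_norm_mul_norm u v
      rw [hnorm] at this
      rw [this, Complex.inner, Complex.inner, Complex.inner]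
      have : (u * conj u).re * (v * conj v).re - (v * conj u).re * (v * conj u).re
          = (conj u * v).im ^ 2 := by
        simp [Complex.mul_re, Complex.mul_im, Complex.conj_re, Complex.conj_im]
        ring
      rw [this, Real.sqrt_sq_eq_abs]
  obtain ⟨hc1, hs1⟩ := key u1 v1
  obtain ⟨hc2, hs2⟩ := key u2 v2
  rw [hang] at hc1 hs1
  rw [← hc1, ← hs2, ← hc2, ← hs1]
  ring

lemma extract (a b c d e s h : ℝ) (hh : e ≠ h)
    (hang : ∠ ((a:ℂ) + e*I) ((s:ℂ) + h*I) ((b:ℂ) + e*I)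
          = ∠ ((c:ℂ) + e*I) ((s:ℂ) + h*I) ((d:ℂ) + e*I)) :
    ((a-s)*(b-s)+(e-h)^2) * |c-d| = ((c-s)*(d-s)+(e-h)^2) * |a-b| := by
  simp only [EuclideanGeometry.angle, vsub_eq_sub] at hang
  have H := ratio_eq _ _ _ _ hang
  have hre1 : (conj ((a:ℂ) + e*I - ((s:ℂ) + h*I)) * ((b:ℂ) + e*I - ((s:ℂ) + h*I))).re
      = (a-s)*(b-s)+(e-h)^2 := by
    simp [Complex.mul_re, Complex.sub_re, Complex.sub_im, Complex.add_re, Complex.add_im,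
      Complex.mul_im, Complex.I_re, Complex.I_im, Complex.ofReal_re, Complex.ofReal_im]
    ring
  have him1 : (conj ((a:ℂ) + e*I - ((s:ℂ) + h*I)) * ((b:ℂ) + e*I - ((s:ℂ) + h*I))).im
      = (e-h)*(a-b) := by
    simp [Complex.mul_re, Complex.sub_re, Complex.sub_im, Complex.add_re, Complex.add_im,
      Complex.mul_im, Complex.I_re, Complex.I_im, Complex.ofReal_re, Complex.ofReal_im]
    ring
  have hre2 : (conj ((c:ℂ) + e*I - ((s:ℂ) + h*I)) * ((d:ℂ) + e*I - ((s:ℂ) + h*I))).re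
      = (c-s)*(d-s)+(e-h)^2 := by
    simp [Complex.mul_re, Complex.sub_re, Complex.sub_im, Complex.add_re, Complex.add_im,
      Complex.mul_im, Complex.I_re, Complex.I_im, Complex.ofReal_re, Complex.ofReal_im]
    ring
  have him2 : (conj ((c:ℂ) + e*I - ((s:ℂ) + h*I)) * ((d:ℂ) + e*I - ((s:ℂ) + h*I))).im
      = (e-h)*(c-d) := by
    simp [Complex.mul_re, Complex.sub_re, Complex.sub_im, Complex.add_re, Complex.add_im,
      Complex.mul_im, Complex.I_re, Complex.I_im, Complex.ofReal_re, Complex.ofReal_im]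
    ring
  rw [hre1, him1, hre2, him2, abs_mul, abs_mul] at H
  apply mul_right_cancel₀ (abs_ne_zero.2 (sub_ne_zero.2 hh))
  linear_combination H

lemma key_alg (R a b c d : ℝ) (hab : a ≠ b) (hcd : c ≠ d)
    (hA : |a*b| < R) (hC : |c*d| < R)
    (h1 : (a+b) * |c-d| = (c+d) * |a-b|)
    (h2 : (R + a*b) * |c-d| = (R + c*d) * |a-b|) :
    (a = c ∧ b = d) ∨ (a = d ∧ b = c) := by
  set D1 : ℝ := |a - b| with hD1
  set D2 : ℝ := |c - d| with hD2
  have hD1pos : 0 < D1 := abs_pos.2 (sub_ne_zero.2 hab)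
  have hD2pos : 0 < D2 := abs_pos.2 (sub_ne_zero.2 hcd)
  have hD1sq : D1^2 = (a-b)^2 := sq_abs _
  have hD2sq : D2^2 = (c-d)^2 := sq_abs _
  have hmul : a*b * D2^2 = c*d * D1^2 := by
    have e1 : (a+b)^2 * D2^2 = (c+d)^2 * D1^2 := by
      linear_combination ((a+b)*D2 + (c+d)*D1) * h1
    linear_combination e1/4 + D2^2/4 * hD1sq - D1^2/4 * hD2sq
  have hdd : D1 = D2 := by
    by_contra hne
    have f1 : (D2 - D1) * (R * D2 - c*d * D1) = 0 := by nlinarith [h2, hmul]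
    have f2 : (D2 - D1) * (R * D1 - a*b * D2) = 0 := by nlinarith [h2, hmul]
    have hsub : D2 - D1 ≠ 0 := fun h => hne (by linarith [sub_eq_zero.1 h])
    have g1 : R * D2 = c*d * D1 := by
      rcases mul_eq_zero.1 f1 with h | h
      · exact absurd h hsub
      · linarith
    have g2 : R * D1 = a*b * D2 := by
      rcases mul_eq_zero.1 f2 with h | h
      · exact absurd h hsub
      · linarith
    have l1 : D2 < D1 := by nlinarith [abs_lt.1 hC, g1]
    have l2 : D1 < D2 := by nlinarith [abs_lt.1 hA, g2]
    linarith
  have hsum : a + b = c + d := by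
    have h1' := h1; rw [hdd] at h1'
    exact mul_right_cancel₀ (ne_of_gt hD2pos) h1'
  have hprod : a * b = c * d := by
    have h2' := h2; rw [hdd] at h2'
    have := mul_right_cancel₀ (ne_of_gt hD2pos) h2'
    linarith
  have hc : (c - a) * (c - b) = 0 := by linear_combination (-c) * hsum + hprod
  rcases mul_eq_zero.1 hc with h | h
  · left
    have hca : a = c := by linarith [sub_eq_zero.1 h]
    exact ⟨hca, by linarith⟩
  · right
    have hcb : b = c := by linarith [sub_eq_zero.1 h]
    exact ⟨by linarith, by linarith⟩

lemma angle_rot (u : Circle) (a b c : ℂ) :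
    ∠ ((u:ℂ)*a) ((u:ℂ)*b) ((u:ℂ)*c) = ∠ a b c := by
  simp only [EuclideanGeometry.angle, vsub_eq_sub, ← mul_sub]
  have := LinearIsometry.angle_map (rotation u).toLinearIsometry (a-b) (c-b)
  simpa using this

lemma aux1 (e r : ℝ) (hr : 0 < r) (her : e^2 < r^2) : ((e-r)/2)^2 < r^2 := by
  nlinarith [sq_nonneg (e+r)]

lemma aux2 (a b e r : ℝ) (ha : a^2+e^2 < r^2) (hb : b^2+e^2 < r^2) : |a*b| < r^2+e^2 := by
  rw [abs_lt]
  constructor <;> nlinarith [sq_nonneg (a-b), sq_nonneg (a+b), sq_nonneg e]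

set_option maxHeartbeats 1000000 in
theorem stmt6 (r : ℝ) (hr : 0 < r) (x y p q : ℂ)
    (hx : ‖x‖ < r) (hy : ‖y‖ < r)
    (hp : ‖p‖ < r) (hq : ‖q‖ < r)
    (hxy : x ≠ y) (hpq : p ≠ q)
    (hcol : Collinear ℝ ({x, y, p, q} : Set ℂ))
    (hangle : ∀ z : ℂ, ‖z‖ = r → ∠ x z y = ∠ p z q) :
    (x = p ∧ y = q) ∨ (x = q ∧ y = p) := by
  have hv : y - x ≠ 0 := sub_ne_zero.2 (Ne.symm hxy)
  have hvabs : ‖y - x‖ ≠ 0 := norm_ne_zero_iff.2 hv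
  set u0 : ℂ := conj (y - x) / (‖y - x‖ : ℂ) with hu0def
  have hu0abs : ‖u0‖ = 1 := by
    rw [hu0def, norm_div, Complex.norm_conj, Complex.norm_real, norm_norm,
      div_self hvabs]
  have hu0ne : u0 ≠ 0 := by
    intro h; rw [h] at hu0abs; simp at hu0abs
  -- u0 rotates the direction y - x to a real number
  have him0 : (u0 * (y - x)).im = 0 := by
    have : u0 * (y - x) = ((Complex.normSq (y - x) / ‖y - x‖ : ℝ) : ℂ) := by
      rw [hu0def, div_mul_eq_mul_div, mul_comm, Complex.mul_conj, Complex.ofReal_div]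
    rw [this, Complex.ofReal_im]
  -- collinearity
  obtain ⟨w, hw⟩ := (collinear_iff_of_mem (show x ∈ ({x,y,p,q}:Set ℂ) by simp)).1 hcol
  obtain ⟨ty, hty⟩ := hw y (by simp)
  obtain ⟨tp, htp⟩ := hw p (by simp)
  obtain ⟨tq, htq⟩ := hw q (by simp)
  have hty0 : ty ≠ 0 := by
    intro h; rw [h, zero_smul, zero_vadd] at hty; exact hxy hty.symm
  have hyx : y - x = ty • w := by rw [hty]; simp [vadd_eq_add]
  have hpx : p - x = (tp/ty) • (y - x) := by
    rw [hyx, htp, smul_smul, div_mul_cancel₀ _ hty0]; simp [vadd_eq_add]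
  have hqx : q - x = (tq/ty) • (y - x) := by
    rw [hyx, htq, smul_smul, div_mul_cancel₀ _ hty0]; simp [vadd_eq_add]
  set e : ℝ := (u0 * x).im with hedef
  have himy : (u0 * y).im = e := by
    have h1 : u0 * y - u0 * x = u0 * (y - x) := by ring
    have := congrArg Complex.im h1
    rw [Complex.sub_im, him0] at this
    linarith
  have himt : ∀ t : ℝ, ∀ z : ℂ, z - x = t • (y - x) → (u0 * z).im = e := by
    intro t z hz
    have h1 : u0 * z - u0 * x = (t : ℂ) * (u0 * (y - x)) := by
      have : z = t • (y - x) + x := by rw [← hz]; ring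
      rw [this, Complex.real_smul]; ring
    have := congrArg Complex.im h1
    rw [Complex.sub_im, Complex.im_ofReal_mul, him0, mul_zero] at this
    linarith
  have himp : (u0 * p).im = e := himt _ _ hpx
  have himq : (u0 * q).im = e := himt _ _ hqx
  set a : ℝ := (u0 * x).re with hadef
  set b : ℝ := (u0 * y).re with hbdef
  set c : ℝ := (u0 * p).re with hcdef
  set d : ℝ := (u0 * q).re with hddef
  have hX : u0 * x = (a:ℂ) + e*I := by rw [hadef, hedef]; exact (re_add_im _).symm
  have hY : u0 * y = (b:ℂ) + e*I := by rw [hbdef, ← himy]; exact (re_add_im _).symm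
  have hP : u0 * p = (c:ℂ) + e*I := by rw [hcdef, ← himp]; exact (re_add_im _).symm
  have hQ : u0 * q = (d:ℂ) + e*I := by rw [hddef, ← himq]; exact (re_add_im _).symm
  -- norm bounds
  have hbound : ∀ z : ℂ, ‖z‖ < r → (u0*z).re^2 + (u0*z).im^2 < r^2 := by
    intro z hz
    have h1 : ‖u0 * z‖ < r := by rwa [norm_mul, hu0abs, one_mul]
    have h2 : ‖u0*z‖ ^ 2 < r^2 :=
      pow_lt_pow_left₀ h1 (norm_nonneg _) (by norm_num)
    rwa [Complex.sq_norm, Complex.normSq_apply, ← sq, ← sq] at h2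
  have hax : a^2 + e^2 < r^2 := hbound x hx
  have hbx : b^2 + e^2 < r^2 := by have := hbound y hy; rwa [himy] at this
  have hcx : c^2 + e^2 < r^2 := by have := hbound p hp; rwa [himp] at this
  have hdx : d^2 + e^2 < r^2 := by have := hbound q hq; rwa [himq] at this
  -- transferred angle hypothesis
  have hangle' : ∀ z' : ℂ, ‖z'‖ = r →
      ∠ ((a:ℂ)+e*I) z' ((b:ℂ)+e*I) = ∠ ((c:ℂ)+e*I) z' ((d:ℂ)+e*I) := by
    intro z' hz'
    set u : Circle := ⟨u0, show u0 ∈ Metric.sphere (0:ℂ) 1 by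
      rwa [mem_sphere_zero_iff_norm]⟩ with hu
    have hcoe : (u : ℂ) = u0 := rfl
    set z : ℂ := conj u0 * z' with hzdef
    have hz : ‖z‖ = r := by
      rw [hzdef, norm_mul, Complex.norm_conj, hu0abs, one_mul, hz']
    have huz : u0 * z = z' := by
      have hns : Complex.normSq u0 = 1 := by
        have := Complex.sq_norm u0; rw [hu0abs] at this; simpa using this.symm
      have hn1 : (Complex.normSq u0 : ℂ) = 1 := by rw [hns]; norm_num
      rw [hzdef, ← mul_assoc, Complex.mul_conj, hn1, one_mul]
    calc ∠ ((a:ℂ)+e*I) z' ((b:ℂ)+e*I) = ∠ (u0*x) (u0*z) (u0*y) := by rw [hX, hY, huz]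
      _ = ∠ x z y := by rw [← hcoe]; exact angle_rot u x z y
      _ = ∠ p z q := hangle z hz
      _ = ∠ (u0*p) (u0*z) (u0*q) := by rw [← hcoe]; exact (angle_rot u p z q).symm
      _ = ∠ ((c:ℂ)+e*I) z' ((d:ℂ)+e*I) := by rw [hP, hQ, huz]
  -- the master equation
  have E : ∀ s h : ℝ, s^2 + h^2 = r^2 → e ≠ h →
      ((a-s)*(b-s)+(e-h)^2) * |c-d| = ((c-s)*(d-s)+(e-h)^2) * |a-b| := by
    intro s h hsh hne
    have habs : ‖(s:ℂ) + h*I‖ = r := by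
      rw [Complex.norm_def, Complex.normSq_apply]
      simp only [Complex.add_re, Complex.ofReal_re, Complex.mul_re, Complex.I_re, Complex.I_im,
        Complex.ofReal_im, Complex.add_im, Complex.mul_im]
      rw [show (s + (h * 0 - 0 * 1)) * (s + (h * 0 - 0 * 1)) + (0 + (h * 1 + 0 * 0)) * (0 + (h * 1 + 0 * 0)) = r^2 by linear_combination hsh, Real.sqrt_sq hr.le]
    exact extract a b c d e s h hne (hangle' _ habs)
  have her : e^2 < r^2 := by linarith [hax, sq_nonneg a]
  have hner : e ≠ r := by intro h; rw [h] at her; exact lt_irrefl _ her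
  have hnenr : e ≠ -r := by intro h; rw [h, neg_sq] at her; exact lt_irrefl _ her
  have E1 := E 0 r (by ring) hner
  have E2 := E 0 (-r) (by ring) hnenr
  set h0 : ℝ := (e - r)/2 with hh0
  have hh0sq : h0^2 < r^2 := by
    rw [hh0]; exact aux1 e r hr her
  have he_h0 : e ≠ h0 := by
    intro hcon
    have : e = -r := by rw [hh0] at hcon; linarith
    exact hnenr this
  set s0 : ℝ := Real.sqrt (r^2 - h0^2) with hs0def
  have hs0sq : s0^2 = r^2 - h0^2 := Real.sq_sqrt (by linarith)
  have hs0pos : 0 < s0 := Real.sqrt_pos.2 (by linarith)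
  have E3 := E s0 h0 (by linarith) he_h0
  have E4 := E (-s0) h0 (by linear_combination hs0sq) he_h0
  -- derive key equations
  have h2' : (r^2 + e^2 + a*b) * |c-d| = (r^2 + e^2 + c*d) * |a-b| := by
    linear_combination (E1 + E2)/2
  have h1'' : (2*s0) * ((a+b) * |c-d|) = (2*s0) * ((c+d) * |a-b|) := by
    linear_combination E4 - E3
  have h1' : (a+b) * |c-d| = (c+d) * |a-b| := by
    exact mul_left_cancel₀ (by positivity) h1''
  -- nondegeneracy
  have hXY : u0 * x ≠ u0 * y := fun h => hxy (mul_left_cancel₀ hu0ne h)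
  have hPQ : u0 * p ≠ u0 * q := fun h => hpq (mul_left_cancel₀ hu0ne h)
  have hab : a ≠ b := by
    intro h
    apply hXY
    apply Complex.ext
    · exact h
    · rw [himy]
  have hcd : c ≠ d := by
    intro h
    apply hPQ
    apply Complex.ext
    · exact h
    · rw [himp, himq]
  have hA : |a*b| < r^2 + e^2 := aux2 a b e r hax hbx
  have hC : |c*d| < r^2 + e^2 := aux2 c d e r hcx hdx
  have hfin := key_alg (r^2 + e^2) a b c d hab hcd hA hC h1' (by linear_combination h2')
  have conc : ∀ z1 z2 : ℂ, (u0*z1).re = (u0*z2).re → (u0*z1).im = (u0*z2).im → z1 = z2 := by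
    intro z1 z2 hre him
    exact mul_left_cancel₀ hu0ne (Complex.ext hre him)
  rcases hfin with ⟨h1, h2⟩ | ⟨h1, h2⟩
  · left
    constructor
    · exact conc x p h1 (by rw [himp])
    · exact conc y q (by rw [← hbdef, ← hddef]; exact h2) (by rw [himy, himq])
  · right
    constructor
    · exact conc x q h1 (by rw [himq])
    · exact conc y p (by rw [← hbdef, ← hcdef]; exact h2) (by rw [himy, himp])
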